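/- For every t ∈ (0, 1) with |t − 1/2| ≥ 1/4, one has J(t) − J(1/2) < −0.005, where J(1/2) = log 2. -/

import Mathlib

/-- The entropy-like function `I(t) = (t-1) log(1-t) - t log t`. -/
noncomputable def Ifun (t : ℝ) : ℝ := (t - 1) * Real.log (1 - t) - t * Real.log t

/-- `J(t) = I(t) + (2t-1)²/2`. -/
noncomputable def Jfun (t : ℝ) : ℝ := Ifun t + (2 * t - 1) ^ 2 / 2

private lemma log_ge_one_sub_inv {x : ℝ} (hx : 0 < x) : 1 - x⁻¹ ≤ Real.log x := by
  have h := Real.log_le_sub_one_of_pos (show (0:ℝ) < x⁻¹ by positivity)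
  rw [Real.log_inv] at h
  linarith

private lemma log_nine_eighth_lb : (1:ℝ)/36 + 1/35 + 1/34 + 1/33 ≤ Real.log (9/8) := by
  have e : (9:ℝ)/8 = (36/35) * ((35/34) * ((34/33) * (33/32))) := by norm_num
  rw [e, Real.log_mul (by norm_num) (by norm_num), Real.log_mul (by norm_num) (by norm_num),
    Real.log_mul (by norm_num) (by norm_num)]
  have h1 := log_ge_one_sub_inv (show (0:ℝ) < 36/35 by norm_num)
  have h2 := log_ge_one_sub_inv (show (0:ℝ) < 35/34 by norm_num)
  have h3 := log_ge_one_sub_inv (show (0:ℝ) < 34/33 by norm_num)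
  have h4 := log_ge_one_sub_inv (show (0:ℝ) < 33/32 by norm_num)
  norm_num at h1 h2 h3 h4 ⊢
  linarith

private lemma two_log_three : 2 * Real.log 3 = 3 * Real.log 2 + Real.log (9/8) := by
  have h9 : Real.log 9 = 2 * Real.log 3 := by
    rw [show (9:ℝ) = 3^2 by norm_num, Real.log_pow]; push_cast; ring
  have h9' : Real.log 9 = 3 * Real.log 2 + Real.log (9/8) := by
    rw [show (9:ℝ) = 8 * (9/8) by norm_num, Real.log_mul (by norm_num) (by norm_num),
      show (8:ℝ) = 2^3 by norm_num, Real.log_pow]; push_cast; ring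
  linarith

private lemma J_at_34 : Jfun (3/4) - Real.log 2 < -0.005 := by
  have l14 : Real.log (1 - 3/4) = -(2 * Real.log 2) := by
    rw [show (1:ℝ) - 3/4 = ((2:ℝ)^2)⁻¹ by norm_num, Real.log_inv, Real.log_pow]
    push_cast; ring
  have l34 : Real.log (3/4 : ℝ) = Real.log 3 - 2 * Real.log 2 := by
    rw [show (3/4:ℝ) = 3 / 2^2 by norm_num, Real.log_div (by norm_num) (by norm_num),
      Real.log_pow]; push_cast; ring
  have h2 := Real.log_two_gt_d9
  have h2' := Real.log_two_lt_d9
  have h3 := two_log_three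
  have h98 := log_nine_eighth_lb
  simp only [Jfun, Ifun, l14, l34]
  norm_num
  nlinarith [h2, h2', h3, h98]

private lemma hasDerivAt_J {t : ℝ} (h0 : 0 < t) (h1 : t < 1) :
    HasDerivAt Jfun (Real.log (1 - t) - Real.log t + 4 * t - 2) t := by
  have hne1 : (1 : ℝ) - t ≠ 0 := by linarith
  have hone : HasDerivAt (fun x : ℝ => 1 - x) (-1) t := by
    simpa using (hasDerivAt_id t).const_sub 1
  have hlog1 : HasDerivAt (fun x : ℝ => Real.log (1 - x)) (-1 / (1 - t)) t :=
    hone.log hne1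
  have hsub : HasDerivAt (fun x : ℝ => x - 1) 1 t := by
    simpa using (hasDerivAt_id t).sub_const 1
  have hA : HasDerivAt (fun x : ℝ => (x - 1) * Real.log (1 - x))
      (1 * Real.log (1 - t) + (t - 1) * (-1 / (1 - t))) t := hsub.mul hlog1
  have hlogt : HasDerivAt Real.log t⁻¹ t := Real.hasDerivAt_log (ne_of_gt h0)
  have hB : HasDerivAt (fun x : ℝ => x * Real.log x)
      (1 * Real.log t + t * t⁻¹) t := (hasDerivAt_id t).mul hlogt
  have hC : HasDerivAt (fun x : ℝ => (2 * x - 1) ^ 2 / 2)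
      (2 * (2 * t - 1) ^ 1 * 2 / 2) t := by
    have : HasDerivAt (fun x : ℝ => 2 * x - 1) 2 t := by
      simpa using ((hasDerivAt_id t).const_mul 2).sub_const 1
    exact (this.pow 2).div_const 2
  have hD := (hA.sub hB).add hC
  have hfun : Jfun = fun x : ℝ =>
      (x - 1) * Real.log (1 - x) - x * Real.log x + (2 * x - 1) ^ 2 / 2 := by
    funext x; simp [Jfun, Ifun]
  rw [hfun]
  refine hD.congr_deriv ?_
  rw [mul_inv_cancel₀ (ne_of_gt h0), show (t - 1) * (-1 / (1 - t)) = (1 - t) / (1 - t) by ring, div_self hne1]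
  ring

private lemma J_anti : AntitoneOn Jfun (Set.Ico (3/4 : ℝ) 1) := by
  apply antitoneOn_of_deriv_nonpos (convex_Ico _ _)
  · intro x hx
    exact (hasDerivAt_J (by linarith [hx.1] : (0:ℝ) < x) hx.2).continuousAt.continuousWithinAt
  · intro x hx
    rw [interior_Ico] at hx
    exact (hasDerivAt_J (by linarith [hx.1]) hx.2).differentiableAt.differentiableWithinAt
  · intro x hx
    rw [interior_Ico] at hx
    obtain ⟨hx1, hx2⟩ := hx
    rw [(hasDerivAt_J (by linarith) hx2).deriv]
    have hu : (0:ℝ) < 1 - x := by linarith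
    have hA : Real.log (4 * (1 - x)) ≤ 4 * (1 - x) - 1 :=
      Real.log_le_sub_one_of_pos (by linarith)
    have hA' : Real.log (4 * (1 - x)) = 2 * Real.log 2 + Real.log (1 - x) := by
      rw [Real.log_mul (by norm_num) (ne_of_gt hu), show (4:ℝ) = 2^2 by norm_num,
        Real.log_pow]; push_cast; ring
    have hB : -Real.log x ≤ x⁻¹ - 1 := by
      have := Real.log_le_sub_one_of_pos (show (0:ℝ) < x⁻¹ by positivity)
      rwa [Real.log_inv] at this
    have hx0 : (0:ℝ) < x := by linarith
    have hinv : x⁻¹ < 4 / 3 := by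
      rw [inv_lt_comm₀ hx0 (by norm_num)]
      linarith
    have h2 := Real.log_two_gt_d9
    linarith [hA, hB]

private lemma J_symm (t : ℝ) : Jfun (1 - t) = Jfun t := by
  simp only [Jfun, Ifun, show (1:ℝ) - (1 - t) = t by ring]
  ring

theorem Jfun_gap_away_from_half :
    Jfun (1 / 2) = Real.log 2 ∧
    ∀ t ∈ Set.Ioo (0 : ℝ) 1, 1 / 4 ≤ |t - 1 / 2| →
      Jfun t - Jfun (1 / 2) < -0.005 := by
  have hhalf : Jfun (1 / 2) = Real.log 2 := by
    have hl : Real.log (1/2 : ℝ) = -Real.log 2 := by rw [one_div, Real.log_inv]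
    simp only [Jfun, Ifun, show (1:ℝ) - 1/2 = 1/2 by norm_num, hl]
    ring
  refine ⟨hhalf, ?_⟩
  intro t ht habs
  rw [hhalf]
  have h34 := J_at_34
  rcases le_abs.mp habs with h | h
  · -- t ≥ 3/4
    have hmem : t ∈ Set.Ico (3/4 : ℝ) 1 := ⟨by linarith, ht.2⟩
    have := J_anti (Set.mem_Ico.mpr ⟨le_refl _, by norm_num⟩) hmem (by linarith)
    linarith
  · -- t ≤ 1/4
    have hmem : 1 - t ∈ Set.Ico (3/4 : ℝ) 1 := ⟨by linarith, by linarith [ht.1]⟩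
    have hle := J_anti (Set.mem_Ico.mpr ⟨le_refl _, by norm_num⟩) hmem (by linarith)
    rw [J_symm t] at hle
    linarith
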